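/- Let $f : (\mathbb{Z}/n\mathbb{Z})^d \to \{-1, 1\}$ and let $M$ be the adjacency matrix of the Cayley graph of $(\mathbb{Z}/n\mathbb{Z})^d$ with connection set $\{-1,0,1\}^d \setminus \{0\}$. Then $f^T M f = \sum_{x} \sum_{v \in \{-1,0,1\}^d\setminus\{0\}} f(x) f(x+v) \geq (-1 - 3^{d-1}) n^d$, provided $n \geq 3$. -/

import Mathlib

open Finset

section Ops
variable {G : Type*} [AddCommGroup G] [Fintype G]

/-- The operator `T a`: sum of shifts by `a`, `0`, `-a`. -/
def Tsh (a : G) (f : G → ℝ) : G → ℝ := fun x => f (x + a) + f x + f (x - a)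

/-- Product of the operators `T a` over a list. -/
def Pop : List G → (G → ℝ) → G → ℝ
  | [], f => f
  | a :: L, f => Tsh a (Pop L f)

/-- The inner product. -/
def ip (f g : G → ℝ) : ℝ := ∑ x, f x * g x

lemma sum_shift (F : G → ℝ) (a : G) : ∑ x, F (x + a) = ∑ x, F x :=
  Fintype.sum_equiv (Equiv.addRight a) _ _ (fun _ => rfl)

lemma sum_shift_mul (f g : G → ℝ) (a : G) :
    ∑ x, f (x + a) * g (x + a) = ∑ x, f x * g x :=
  sum_shift (fun x => f x * g x) a

lemma sum_sub_shift (f g : G → ℝ) (a : G) :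
    ∑ x, f x * g (x - a) = ∑ x, f (x + a) * g x := by
  have := sum_shift (fun x => f x * g (x - a)) a
  simpa [add_sub_cancel_right] using this.symm

lemma ip_self_nonneg (f : G → ℝ) : 0 ≤ ip f f :=
  Finset.sum_nonneg fun x _ => mul_self_nonneg _

lemma Top_shift (b a : G) (f : G → ℝ) :
    Tsh b (fun x => f (x + a)) = fun x => Tsh b f (x + a) := by
  funext x
  simp only [Tsh]
  rw [show x + b + a = x + a + b by abel, show x - b + a = x + a - b by abel]

lemma Pop_shift (L : List G) (a : G) (f : G → ℝ) :
    Pop L (fun x => f (x + a)) = fun x => Pop L f (x + a) := by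
  induction L with
  | nil => rfl
  | cons b L ih => simp only [Pop, ih, Top_shift]

lemma Top_add (a : G) (f g : G → ℝ) :
    Tsh a (fun x => f x + g x) = fun x => Tsh a f x + Tsh a g x := by
  funext x; simp only [Tsh]; ring

lemma Top_sub (a : G) (f g : G → ℝ) :
    Tsh a (fun x => f x - g x) = fun x => Tsh a f x - Tsh a g x := by
  funext x; simp only [Tsh]; ring

lemma Pop_add (L : List G) (f g : G → ℝ) :
    Pop L (fun x => f x + g x) = fun x => Pop L f x + Pop L g x := by
  induction L with
  | nil => rfl
  | cons b L ih => simp only [Pop, ih, Top_add]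

lemma Pop_sub (L : List G) (f g : G → ℝ) :
    Pop L (fun x => f x - g x) = fun x => Pop L f x - Pop L g x := by
  induction L with
  | nil => rfl
  | cons b L ih => simp only [Pop, ih, Top_sub]

lemma ip_Top_self (f g : G → ℝ) (a : G) :
    ip f (Tsh a g) = ip f g + ((∑ x, f x * g (x + a)) + ∑ x, f (x + a) * g x) := by
  simp only [ip, Tsh, mul_add, Finset.sum_add_distrib, sum_sub_shift f g a]
  ring

lemma Pop_norm (L : List G) (f : G → ℝ) :
    ip (Pop L f) (Pop L f) ≤ 9 ^ L.length * ip f f := by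
  induction L with
  | nil => simp [Pop]
  | cons b L ih =>
    have key : ip (Tsh b (Pop L f)) (Tsh b (Pop L f)) ≤ 9 * ip (Pop L f) (Pop L f) := by
      set g := Pop L f with hg
      have h1 : ∀ x : G, Tsh b g x * Tsh b g x ≤
          3 * (g (x + b) * g (x + b)) + 3 * (g x * g x) + 3 * (g (x - b) * g (x - b)) := by
        intro x; simp only [Tsh]; nlinarith [sq_nonneg (g (x+b) - g x), sq_nonneg (g x - g (x-b)),
          sq_nonneg (g (x+b) - g (x-b))]
      calc ip (Tsh b g) (Tsh b g) ≤ ∑ x, (3 * (g (x + b) * g (x + b)) + 3 * (g x * g x)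
            + 3 * (g (x - b) * g (x - b))) := Finset.sum_le_sum fun x _ => h1 x
        _ = 9 * ip g g := by
            have hsub : ∑ x : G, g (x - b) * g (x - b) = ∑ x, g x * g x := by
              have h := sum_shift (fun x => g (x - b) * g (x - b)) b
              simp only [add_sub_cancel_right] at h
              exact h.symm
            simp only [Finset.sum_add_distrib, ← Finset.mul_sum, ip]
            rw [sum_shift (fun x => g x * g x) b, hsub]
            ring
    calc ip (Pop (b :: L) f) (Pop (b :: L) f) ≤ 9 * ip (Pop L f) (Pop L f) := key
      _ ≤ 9 * (9 ^ L.length * ip f f) := by linarith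
      _ = 9 ^ (b :: L).length * ip f f := by rw [List.length_cons]; ring

lemma Pop_cs (L : List G) (f : G → ℝ) :
    |ip f (Pop L f)| ≤ 3 ^ L.length * ip f f := by
  have hcs : (ip f (Pop L f)) ^ 2 ≤ ip f f * ip (Pop L f) (Pop L f) := by
    have := Finset.sum_mul_sq_le_sq_mul_sq Finset.univ f (Pop L f)
    simpa [ip, sq] using this
  have hn := Pop_norm L f
  have hff := ip_self_nonneg f
  have h9 : (9 : ℝ) ^ L.length = (3 ^ L.length) ^ 2 := by
    rw [← pow_mul, mul_comm, pow_mul]; norm_num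
  have hsq : (ip f (Pop L f)) ^ 2 ≤ (3 ^ L.length * ip f f) ^ 2 := by
    calc (ip f (Pop L f)) ^ 2 ≤ ip f f * ip (Pop L f) (Pop L f) := hcs
      _ ≤ ip f f * (9 ^ L.length * ip f f) := by nlinarith
      _ = (3 ^ L.length * ip f f) ^ 2 := by rw [h9]; ring
  have hb : (0:ℝ) ≤ 3 ^ L.length * ip f f := by positivity
  exact abs_le_of_sq_le_sq' hsq hb |>.2 |> fun h2 => abs_le.mpr ⟨(abs_le_of_sq_le_sq' hsq hb).1, h2⟩

lemma mainLB : ∀ (L : List G) (a : G) (f : G → ℝ),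
    -(3 ^ L.length) * ip f f ≤ ip f (Tsh a (Pop L f)) := by
  intro L
  induction L with
  | nil =>
    intro a f
    simp only [Pop, List.length_nil, pow_zero]
    have h0 : (0:ℝ) ≤ ∑ x, (f x + f (x + a)) * (f x + f (x + a)) :=
      Finset.sum_nonneg fun x _ => mul_self_nonneg _
    have hexp : ∑ x, (f x + f (x + a)) * (f x + f (x + a)) =
        2 * ip f f + ((∑ x, f x * f (x + a)) + ∑ x, f (x + a) * f x) := by
      simp only [ip, add_mul, mul_add, Finset.sum_add_distrib, sum_shift_mul f f a]
      ring
    have hT := ip_Top_self f f a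
    linarith
  | cons b L ih =>
    intro a f
    set m := L.length with hm
    set Pf := Pop (b :: L) f with hPf
    set Ef : G → ℝ := fun x => f x + f (x + a) with hEf
    set Ff : G → ℝ := fun x => f x - f (x + a) with hFf
    set A := ip f Pf with hA
    set B := (∑ x, f x * Pf (x + a)) + ∑ x, f (x + a) * Pf x with hB
    set C0 := ip f f with hC0
    set C1 := ∑ x, f x * f (x + a) with hC1
    -- expansions
    have hPE : Pop (b :: L) Ef = fun x => Pf x + Pf (x + a) := by
      rw [hEf, show (fun x => f x + f (x + a)) = (fun x => f x + (fun y => f (y + a)) x) from rfl,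
        Pop_add, Pop_shift]
    have hPF : Pop (b :: L) Ff = fun x => Pf x - Pf (x + a) := by
      rw [hFf, show (fun x => f x - f (x + a)) = (fun x => f x - (fun y => f (y + a)) x) from rfl,
        Pop_sub, Pop_shift]
    have hE1 : ip Ef (Pop (b :: L) Ef) = 2 * A + B := by
      rw [hPE]
      simp only [ip, hEf, add_mul, mul_add, Finset.sum_add_distrib, hA, hB,
        sum_shift_mul f Pf a]
      ring
    have hF1 : ip Ff (Pop (b :: L) Ff) = 2 * A - B := by
      rw [hPF]
      simp only [ip, hFf, sub_mul, mul_sub, Finset.sum_sub_distrib, hA, hB,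
        sum_shift_mul f Pf a]
      ring
    have hEE : ip Ef Ef = 2 * C0 + 2 * C1 := by
      simp only [ip, hEf, add_mul, mul_add, Finset.sum_add_distrib, hC0, hC1,
        sum_shift_mul f f a]
      have : ∑ x, f (x + a) * f x = C1 := by
        rw [hC1]; exact Finset.sum_congr rfl fun x _ => mul_comm _ _
      linarith [this]
    have hFF : ip Ff Ff = 2 * C0 - 2 * C1 := by
      simp only [ip, hFf, sub_mul, mul_sub, Finset.sum_sub_distrib, hC0, hC1,
        sum_shift_mul f f a]
      have : ∑ x, f (x + a) * f x = C1 := by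
        rw [hC1]; exact Finset.sum_congr rfl fun x _ => mul_comm _ _
      linarith [this]
    have hT : ip f (Tsh a Pf) = A + B := by
      rw [ip_Top_self, ← hB, ← hA]
    -- inductive bound applied to Ef, with P = Tsh b (Pop L ·) = Pop (b::L)
    have hIH : -(3 ^ m) * ip Ef Ef ≤ ip Ef (Pop (b :: L) Ef) := ih b Ef
    have hCS : ip Ff (Pop (b :: L) Ff) ≤ 3 ^ (m + 1) * ip Ff Ff := by
      have := Pop_cs (b :: L) Ff
      have hlen : (b :: L).length = m + 1 := by simp [hm]
      rw [hlen] at this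
      exact (abs_le.mp this).2
    rw [hT]
    rw [hE1, hEE] at hIH
    rw [hF1, hFF] at hCS
    have hps : (3:ℝ) ^ (m + 1) = 3 * 3 ^ m := by rw [pow_succ]; ring
    have hlen2 : (b :: L).length = m + 1 := by simp [hm]
    rw [hlen2, hps]
    rw [hps] at hCS
    nlinarith [hIH, hCS]
end Ops

section Eval
variable {G : Type*} [AddCommGroup G] [Fintype G]

def eps : Fin 3 → ℤ := ![0, 1, -1]

@[simp] lemma eps0 : eps 0 = 0 := rfl
@[simp] lemma eps1 : eps 1 = 1 := rfl
@[simp] lemma eps2 : eps 2 = -1 := rfl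

lemma Pop_eval (m : ℕ) (g : Fin m → G) (f : G → ℝ) (x : G) :
    Pop (List.ofFn g) f x = ∑ c : Fin m → Fin 3, f (x + ∑ i, eps (c i) • g i) := by
  induction m generalizing x with
  | zero =>
    simp [Pop, List.ofFn_zero]
  | succ m ih =>
    have key : ∑ c : Fin (m + 1) → Fin 3, f (x + ∑ i, eps (c i) • g i)
        = ∑ t : Fin 3, ∑ c : Fin m → Fin 3,
            f (x + (eps t • g 0 + ∑ i : Fin m, eps (c i) • g i.succ)) := by
      rw [← Equiv.sum_comp (Fin.consEquiv (fun _ => Fin 3))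
        (fun c : Fin (m + 1) → Fin 3 => f (x + ∑ i, eps (c i) • g i))]
      rw [Fintype.sum_prod_type]
      refine Finset.sum_congr rfl fun t _ => Finset.sum_congr rfl fun c _ => ?_
      congr 2
      rw [Fin.sum_univ_succ]
      simp [Fin.consEquiv]
    rw [List.ofFn_succ]
    simp only [Pop, Tsh]
    rw [ih, ih, ih, key, Fin.sum_univ_three]
    simp only [eps0, eps1, eps2, zero_smul, one_smul, neg_smul, zero_add]
    have e1 : ∀ s : G, x + (g 0 + s) = x + g 0 + s := fun s => (add_assoc _ _ _).symm
    have e3 : ∀ s : G, x + (-g 0 + s) = x - g 0 + s := fun s => by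
      rw [sub_eq_add_neg, add_assoc]
    simp only [e1, e3]
    ring
end Eval


lemma fin3_cases (t : Fin 3) : t = 0 ∨ t = 1 ∨ t = 2 := by revert t; decide

theorem stmt_5 (n d : ℕ) [NeZero n] (hn : 3 ≤ n)
    (f : (Fin d → ZMod n) → ℝ) (hf : ∀ x, f x = 1 ∨ f x = -1) :
    ((-1 - 3 ^ (d - 1) : ℝ)) * n ^ d ≤
      ∑ x : Fin d → ZMod n,
        ∑ v ∈ Finset.univ.filter
            (fun v : Fin d → ZMod n => (∀ j, v j = 0 ∨ v j = 1 ∨ v j = -1) ∧ v ≠ 0),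
          f x * f (x + v) := by
  classical
  haveI : Fact (1 < n) := ⟨by omega⟩
  have h10 : (1 : ZMod n) ≠ 0 := one_ne_zero
  have hm10 : (-1 : ZMod n) ≠ 0 := neg_ne_zero.mpr h10
  have h1m1 : (1 : ZMod n) ≠ -1 := by
    intro h
    have h2 : ((2 : ℕ) : ZMod n) = 0 := by
      push_cast
      linear_combination h
    have hdvd := (ZMod.natCast_eq_zero_iff 2 n).mp h2
    have := Nat.le_of_dvd (by norm_num) hdvd
    omega
  rcases Nat.eq_zero_or_pos d with hd | hd
  · subst hd
    have hempty : (Finset.univ.filter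
        (fun v : Fin 0 → ZMod n => (∀ j, v j = 0 ∨ v j = 1 ∨ v j = -1) ∧ v ≠ 0)) = ∅ := by
      ext v
      simp [Subsingleton.elim v 0]
    rw [Fintype.sum_congr _ _ (fun x => by rw [hempty, Finset.sum_empty])]
    norm_num
  · -- main case
    set e : Fin d → (Fin d → ZMod n) := fun j => Pi.single j (1 : ZMod n) with he
    have hPhi : ∀ c : Fin d → Fin 3,
        (∑ j, eps (c j) • e j) = fun k => ((eps (c k) : ℤ) : ZMod n) := by
      intro c; funext k
      rw [Finset.sum_apply, Finset.sum_eq_single k]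
      · rw [Pi.smul_apply, he]
        simp only [Pi.single_eq_same, zsmul_one]
      · intro j _ hj
        rw [Pi.smul_apply, he]
        simp only
        rw [Pi.single_eq_of_ne (Ne.symm hj), smul_zero]
      · intro hk; exact absurd (Finset.mem_univ k) hk
    have hcube : ∀ x : Fin d → ZMod n, Pop (List.ofFn e) f x
        = ∑ v ∈ Finset.univ.filter
            (fun v : Fin d → ZMod n => ∀ j, v j = 0 ∨ v j = 1 ∨ v j = -1), f (x + v) := by
      intro x
      rw [Pop_eval]
      simp only [hPhi]
      refine Finset.sum_nbij' (fun c => fun k => ((eps (c k) : ℤ) : ZMod n))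
        (fun v => fun k => if v k = 0 then 0 else if v k = 1 then 1 else 2)
        ?_ ?_ ?_ ?_ ?_
      · intro c _
        simp only [Finset.mem_filter, Finset.mem_univ, true_and]
        intro j
        rcases fin3_cases (c j) with h | h | h <;> simp [h]
      · intro v _; exact Finset.mem_univ _
      · intro c _
        funext k
        rcases fin3_cases (c k) with h | h | h <;>
          simp [h, h10, hm10, Ne.symm h1m1]
      · intro v hv
        simp only [Finset.mem_filter, Finset.mem_univ, true_and] at hv
        funext k
        rcases hv k with h | h | h <;> simp [h, h10, hm10, Ne.symm h1m1]
      · intro c _; rfl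
    have hip : ip f f = (n : ℝ) ^ d := by
      have h1 : ∀ x : Fin d → ZMod n, f x * f x = 1 := fun x => by
        rcases hf x with h | h <;> rw [h] <;> norm_num
      unfold ip
      rw [Finset.sum_congr rfl (fun x _ => h1 x), Finset.sum_const, Finset.card_univ]
      simp [Fintype.card_fun, ZMod.card]
    -- split off v = 0
    have h0mem : (0 : Fin d → ZMod n) ∈ Finset.univ.filter
        (fun v : Fin d → ZMod n => ∀ j, v j = 0 ∨ v j = 1 ∨ v j = -1) := by
      simp
    have hset : Finset.univ.filter
          (fun v : Fin d → ZMod n => (∀ j, v j = 0 ∨ v j = 1 ∨ v j = -1) ∧ v ≠ 0)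
        = (Finset.univ.filter
            (fun v : Fin d → ZMod n => ∀ j, v j = 0 ∨ v j = 1 ∨ v j = -1)).erase 0 := by
      ext v
      simp only [Finset.mem_filter, Finset.mem_erase, Finset.mem_univ, true_and]
      tauto
    have hsplit : ∀ x : Fin d → ZMod n,
        ∑ v ∈ Finset.univ.filter
            (fun v : Fin d → ZMod n => (∀ j, v j = 0 ∨ v j = 1 ∨ v j = -1) ∧ v ≠ 0),
          f x * f (x + v)
        = f x * Pop (List.ofFn e) f x - f x * f x := by
      intro x
      rw [hset]
      have := Finset.sum_erase_add _ (fun v => f x * f (x + v)) h0mem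
      rw [hcube x, Finset.mul_sum]
      simp only [add_zero] at this
      linarith [this]
    rw [Fintype.sum_congr _ _ (fun x => hsplit x)]
    rw [Finset.sum_sub_distrib]
    -- identify with inner products
    have hL : ∃ b L', List.ofFn e = b :: L' ∧ L'.length = d - 1 := by
      have hlen : (List.ofFn e).length = d := List.length_ofFn
      cases hLc : List.ofFn e with
      | nil => rw [hLc] at hlen; simp at hlen; omega
      | cons b L' =>
        rw [hLc] at hlen
        simp at hlen
        exact ⟨b, L', rfl, by omega⟩
    obtain ⟨b, L', hbl, hlen'⟩ := hL
    have hmain : -(3 ^ L'.length) * ip f f ≤ ip f (Pop (List.ofFn e) f) := by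
      rw [hbl]
      exact mainLB L' b f
    have heq1 : ∑ x : Fin d → ZMod n, f x * Pop (List.ofFn e) f x
        = ip f (Pop (List.ofFn e) f) := rfl
    have heq2 : ∑ x : Fin d → ZMod n, f x * f x = ip f f := rfl
    rw [heq1, heq2, hip] at *
    rw [hlen'] at hmain
    have hn0 : (0:ℝ) ≤ (n:ℝ) ^ d := by positivity
    linarith [hmain]
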